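/- arXiv:2006.16141 — 4 statements merged into one kernel-verified Lean document; each statement's English description precedes it below -/
import Mathlib

section
/- Let ρ be a gauge. Define a_{n,ε} := 0 if ε < 1/(n+1) and a_{n,ε} := 1 otherwise. Then for every fixed n ∈ ℕ the net (a_{n,ε})_ε is ρ-negligible (in fact eventually 0 as ε → 0⁺), yet for any net (N_ε) of naturals, Σ_{n=0}^{N_ε} a_{n,ε} = N_ε − ⌈1/ε⌉ + 2 whenever N_ε ≥ ⌈1/ε⌉ − 1; in particular, if N_ε − ⌈1/ε⌉ → +∞, the net of partial sums is not ρ-negligible. Hence equality of terms (as generalized numbers) does not imply equality of hyperfinite sums. -/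
open Filter Finset

def IsGauge (ρ : ℝ → ℝ) : Prop :=
  (∀ ε : ℝ, 0 < ε → ε ≤ 1 → 0 < ρ ε ∧ ρ ε ≤ 1) ∧
    Tendsto ρ (nhdsWithin 0 (Set.Ioi 0)) (nhds 0)

def EvSmall (P : ℝ → Prop) : Prop := ∃ ε₀ : ℝ, 0 < ε₀ ∧ ∀ ε : ℝ, 0 < ε → ε ≤ ε₀ → P ε

/-- The counterexample net: `a n ε = 0` if `ε < 1/(n+1)`, else `1`. -/
noncomputable def counterNet (n : ℕ) (ε : ℝ) : ℝ := if ε < 1 / (n + 1) then 0 else 1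

lemma counterNet_eq (n : ℕ) (ε : ℝ) (hε : 0 < ε) :
    counterNet n ε = if ⌈1 / ε⌉₊ ≤ n + 1 then 1 else 0 := by
  unfold counterNet
  have hpos : (0:ℝ) < (n:ℝ) + 1 := by positivity
  have h1 : ε < 1 / (n + 1) ↔ ¬ (⌈1 / ε⌉₊ ≤ n + 1) := by
    rw [Nat.ceil_le, not_le, lt_div_iff₀ hpos, lt_div_iff₀ hε]
    push_cast
    constructor <;> intro h <;> nlinarith
  rcases lt_or_ge ε (1 / (n + 1)) with h | h
  · rw [if_pos h, if_neg (h1.mp h)]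
  · rw [if_neg (not_lt.mpr h), if_pos (by by_contra hc; exact absurd (h1.mpr hc) (not_lt.mpr h))]

lemma sum_counterNet (M : ℕ) (ε : ℝ) (hε : 0 < ε) (hM : ⌈1 / ε⌉₊ - 1 ≤ M) (hc : 1 ≤ ⌈1 / ε⌉₊) :
    ∑ n ∈ Finset.range (M + 1), counterNet n ε = (M : ℝ) - (⌈1 / ε⌉₊ : ℝ) + 2 := by
  set c := ⌈1 / ε⌉₊ with hcdef
  have : ∑ n ∈ Finset.range (M + 1), counterNet n ε
      = ∑ n ∈ Finset.range (M + 1), (if c ≤ n + 1 then (1:ℝ) else 0) := by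
    exact Finset.sum_congr rfl fun n _ => counterNet_eq n ε hε
  rw [this, Finset.sum_boole]
  have hfe : (Finset.range (M + 1)).filter (fun n => c ≤ n + 1) = Finset.Ico (c - 1) (M + 1) := by
    ext n
    simp only [Finset.mem_filter, Finset.mem_range, Finset.mem_Ico]
    omega
  rw [hfe, Nat.card_Ico]
  have : M + 1 - (c - 1) = M + 2 - c := by omega
  rw [this, Nat.cast_sub (by omega)]
  push_cast
  ring

theorem counterNet_terms_negligible_but_sums_not (ρ : ℝ → ℝ) (hρ : IsGauge ρ) :
    (∀ n : ℕ, ∀ q : ℕ, EvSmall (fun ε => |counterNet n ε| ≤ ρ ε ^ q)) ∧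
    (∀ N : ℝ → ℕ, ∀ ε : ℝ, 0 < ε → ε ≤ 1 → (⌈1 / ε⌉₊ : ℝ) - 1 ≤ (N ε : ℝ) →
      ∑ n ∈ Finset.range (N ε + 1), counterNet n ε = (N ε : ℝ) - (⌈1 / ε⌉₊ : ℝ) + 2) ∧
    (∀ N : ℝ → ℕ,
      Tendsto (fun ε => (N ε : ℝ) - (⌈1 / ε⌉₊ : ℝ)) (nhdsWithin 0 (Set.Ioi 0)) atTop →
      ¬ (∀ q : ℕ, EvSmall (fun ε => |∑ n ∈ Finset.range (N ε + 1), counterNet n ε| ≤ ρ ε ^ q))) := by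
  obtain ⟨hρ1, hρ2⟩ := hρ
  have hone : ∀ ε : ℝ, 0 < ε → ε ≤ 1 → 1 ≤ ⌈1 / ε⌉₊ := by
    intro ε h0 h1
    exact Nat.one_le_ceil_iff.mpr (by positivity)
  have key : ∀ (M : ℕ) (ε : ℝ), 0 < ε → ε ≤ 1 → (⌈1 / ε⌉₊ : ℝ) - 1 ≤ (M : ℝ) →
      ∑ n ∈ Finset.range (M + 1), counterNet n ε = (M : ℝ) - (⌈1 / ε⌉₊ : ℝ) + 2 := by
    intro M ε h0 h1 hM
    apply sum_counterNet M ε h0 _ (hone ε h0 h1)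
    have : (⌈1 / ε⌉₊ : ℝ) ≤ (M : ℝ) + 1 := by linarith
    have := Nat.cast_le (α := ℝ).mp (by push_cast; linarith : ((⌈1 / ε⌉₊ : ℕ) : ℝ) ≤ ((M + 1 : ℕ) : ℝ))
    omega
  refine ⟨?_, fun N ε h0 h1 hM => key (N ε) ε h0 h1 hM, ?_⟩
  · intro n q
    refine ⟨min (1 / ((n:ℝ) + 2)) 1, lt_min (by positivity) one_pos, fun ε h0 hle => ?_⟩
    have hε1 : ε ≤ 1 := le_trans hle (min_le_right _ _)
    have hεn : ε < 1 / (n + 1) := by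
      have h2 : ε ≤ 1 / ((n:ℝ) + 2) := le_trans hle (min_le_left _ _)
      have : (1:ℝ) / ((n:ℝ) + 2) < 1 / ((n:ℝ) + 1) := by
        exact one_div_lt_one_div_of_lt (by positivity) (by linarith)
      linarith
    simp only [counterNet]
    rw [if_pos hεn, abs_zero]
    exact pow_nonneg (le_of_lt (hρ1 ε h0 hε1).1) q
  · intro N hT hneg
    obtain ⟨ε₀, hε₀, h₀⟩ := hneg 0
    have hev := hT.eventually (eventually_ge_atTop (1 : ℝ))
    obtain ⟨δ, hδ, hδ'⟩ := (nhdsGT_basis (0:ℝ)).eventually_iff.mp hev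
    set ε := min (δ/2) (min ε₀ 1) with hεdef
    have h0 : 0 < ε := lt_min (by positivity) (lt_min hε₀ one_pos)
    have h1 : ε ≤ 1 := le_trans (min_le_right _ _) (min_le_right _ _)
    have hεε₀ : ε ≤ ε₀ := le_trans (min_le_right _ _) (min_le_left _ _)
    have hmem : ε ∈ Set.Ioo (0:ℝ) δ := ⟨h0, lt_of_le_of_lt (min_le_left _ _) (by linarith)⟩
    have hge : (1:ℝ) ≤ (N ε : ℝ) - (⌈1 / ε⌉₊ : ℝ) := hδ' hmem
    have hsum := key (N ε) ε h0 h1 (by linarith)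
    have habs := h₀ ε h0 hεε₀
    simp only [pow_zero, hsum] at habs
    have := abs_le.mp habs
    linarith [this.2]
end

section
/- Let ρ be a gauge and let (k_ε) be a net with 0 < k_ε < 1 for all ε, such that both (k_ε) and (1/(1−k_ε)) are ρ-moderate, and 1−k_ε ≥ ρ_ε^m for some m ∈ ℕ and ε small, and k = [k_ε] satisfies k ≤ 1 − ρ_ε^m invertibly (i.e. [k_ε] < 1 in the sharp order). Then the geometric hyperseries converges to 1/(1−k) in the following sense: for every q ∈ ℕ there exists a ρ-moderate net of naturals (M_ε) such that for every net of naturals (N_ε) with N_ε ≥ M_ε for ε small, | Σ_{n=0}^{N_ε} k_ε^n − 1/(1−k_ε) | ≤ ρ_ε^q for ε sufficiently small. -/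
open Filter Finset

def Moderate (ρ : ℝ → ℝ) (x : ℝ → ℝ) : Prop :=
  ∃ N : ℕ, EvSmall (fun ε => |x ε| ≤ ρ ε ^ (-(N : ℤ)))

/-- Bernoulli-type bound: `(1-x)^n ≤ 1/(n*x)` for `0 < x ≤ 1`. -/
lemma pow_one_sub_le (x : ℝ) (hx : 0 < x) (hx1 : x ≤ 1) (n : ℕ) (hn : 0 < n) :
    (1 - x) ^ n ≤ 1 / (n * x) := by
  have hnx : 0 < (n : ℝ) * x := by positivity
  rw [le_div_iff₀ hnx]
  have h1 : (n : ℝ) * x ≤ 1 + n * x := by linarith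
  have h2 : (1 + (n : ℝ) * x) ≤ (1 + x) ^ n := one_add_mul_le_pow (by linarith) n
  have h3 : (1 - x) ^ n * ((n : ℝ) * x) ≤ (1 - x) ^ n * ((1 + x) ^ n) := by
    apply mul_le_mul_of_nonneg_left (le_trans h1 h2) (pow_nonneg (by linarith) n)
  calc (1 - x) ^ n * ((n : ℝ) * x) ≤ (1 - x) ^ n * (1 + x) ^ n := h3
    _ = ((1 - x) * (1 + x)) ^ n := (mul_pow _ _ _).symm
    _ = (1 - x ^ 2) ^ n := by ring_nf
    _ ≤ 1 ^ n := pow_le_pow_left₀ (by nlinarith) (by nlinarith) n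
    _ = 1 := one_pow n

/-- Geometric hyperseries: `Σ k^n = 1/(1-k)` for `0 < k < 1` invertibly away from `1`. -/
theorem geometric_hyperseries (ρ : ℝ → ℝ) (hρ : IsGauge ρ)
    (k : ℝ → ℝ) (hk : ∀ ε : ℝ, 0 < ε → ε ≤ 1 → 0 < k ε ∧ k ε < 1)
    (hkmod : Moderate ρ k) (hinvmod : Moderate ρ (fun ε => 1 / (1 - k ε)))
    (m : ℕ) (hminv : EvSmall (fun ε => ρ ε ^ m ≤ 1 - k ε)) :
    ∀ q : ℕ, ∃ M : ℝ → ℕ, Moderate ρ (fun ε => (M ε : ℝ)) ∧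
      ∀ N : ℝ → ℕ, EvSmall (fun ε => M ε ≤ N ε) →
        EvSmall (fun ε =>
          |∑ n ∈ Finset.range (N ε + 1), k ε ^ n - 1 / (1 - k ε)| ≤ ρ ε ^ q) := by
  obtain ⟨hρ1, hρ2⟩ := hρ
  obtain ⟨N₀, ε₁, hε₁, hN₀⟩ := hinvmod
  obtain ⟨ε₂, hε₂, hm⟩ := hminv
  -- eventually ρ ε ≤ 1/2
  have hhalf : ∃ ε₃ : ℝ, 0 < ε₃ ∧ ∀ ε : ℝ, 0 < ε → ε ≤ ε₃ → ρ ε < 1/2 := by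
    have h2 : ∀ᶠ ε in nhdsWithin 0 (Set.Ioi 0), ρ ε < 1/2 :=
      hρ2.eventually (gt_mem_nhds (by norm_num))
    rw [eventually_iff, mem_nhdsGT_iff_exists_Ioo_subset] at h2
    obtain ⟨u, hu, hsub⟩ := h2
    exact ⟨u/2, by simpa using hu, fun ε hε hε' => hsub ⟨hε, by simp at hu; linarith⟩⟩
  obtain ⟨ε₃, hε₃, hh⟩ := hhalf
  intro q
  set r := q + N₀ + m with hr
  refine ⟨fun ε => ⌈(ρ ε)⁻¹ ^ r⌉₊, ?_, ?_⟩
  · -- moderateness of M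
    refine ⟨r + 1, min ε₃ 1, lt_min hε₃ one_pos, fun ε hε hε' => ?_⟩
    have hε1 : ε ≤ 1 := le_trans hε' (min_le_right _ _)
    obtain ⟨hρpos, hρle⟩ := hρ1 ε hε hε1
    have hρh : ρ ε < 1/2 := hh ε hε (le_trans hε' (min_le_left _ _))
    have hb : (0:ℝ) ≤ (ρ ε)⁻¹ ^ r := by positivity
    have h1 : ((⌈(ρ ε)⁻¹ ^ r⌉₊ : ℝ)) ≤ (ρ ε)⁻¹ ^ r + 1 := (Nat.ceil_lt_add_one hb).le
    have h2 : (1:ℝ) ≤ (ρ ε)⁻¹ ^ r := one_le_pow₀ (by rwa [le_inv_comm₀ one_pos hρpos, inv_one])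
    have h3 : (2:ℝ) ≤ (ρ ε)⁻¹ := by
      rw [le_inv_comm₀ (by norm_num) hρpos]; linarith
    dsimp only
    rw [abs_of_nonneg (by positivity)]
    calc ((⌈(ρ ε)⁻¹ ^ r⌉₊ : ℝ)) ≤ (ρ ε)⁻¹ ^ r + 1 := h1
      _ ≤ 2 * (ρ ε)⁻¹ ^ r := by linarith
      _ ≤ (ρ ε)⁻¹ * (ρ ε)⁻¹ ^ r := by
          apply mul_le_mul_of_nonneg_right h3 (by positivity)
      _ = (ρ ε)⁻¹ ^ (r + 1) := by ring
      _ = ρ ε ^ (-(((r:ℕ) + 1 : ℕ) : ℤ)) := by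
          rw [zpow_neg, zpow_natCast, inv_pow]
  · -- main estimate
    intro N ⟨εN, hεN, hMN⟩
    refine ⟨min (min ε₁ ε₂) (min εN 1), by positivity, fun ε hε hε' => ?_⟩
    have hε1 : ε ≤ 1 := le_trans hε' (le_trans (min_le_right _ _) (min_le_right _ _))
    obtain ⟨hρpos, hρle⟩ := hρ1 ε hε hε1
    obtain ⟨hkpos, hklt⟩ := hk ε hε hε1
    have h1k : 0 < 1 - k ε := by linarith
    have hinv : 1 / (1 - k ε) ≤ ρ ε ^ (-(N₀ : ℤ)) := by
      have h := hN₀ ε hε (le_trans hε' (le_trans (min_le_left _ _) (min_le_left _ _)))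
      dsimp only at h
      rwa [abs_of_nonneg (div_nonneg one_pos.le h1k.le)] at h
    have hmε : ρ ε ^ m ≤ 1 - k ε :=
      hm ε hε (le_trans hε' (le_trans (min_le_left _ _) (min_le_right _ _)))
    have hMNε : ⌈(ρ ε)⁻¹ ^ r⌉₊ ≤ N ε :=
      hMN ε hε (le_trans hε' (le_trans (min_le_right _ _) (min_le_left _ _)))
    -- sum identity
    have hne : (1:ℝ) - k ε ≠ 0 := ne_of_gt h1k
    have h2 : ∑ n ∈ Finset.range (N ε + 1), k ε ^ n
        = (1 - k ε ^ (N ε + 1)) / (1 - k ε) := by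
      rw [geom_sum_eq (ne_of_lt hklt), ← neg_div_neg_eq]
      ring_nf
    have hsum : ∑ n ∈ Finset.range (N ε + 1), k ε ^ n - 1 / (1 - k ε)
        = -(k ε ^ (N ε + 1) / (1 - k ε)) := by
      rw [h2]
      field_simp
      ring
    dsimp only
    rw [hsum, abs_neg, abs_of_nonneg (div_nonneg (by positivity) h1k.le)]
    -- k^{N+1} ≤ (1 - ρ^m)^{N+1} ≤ 1/((N+1) ρ^m)
    have hkb : k ε ≤ 1 - ρ ε ^ m := by linarith
    have hρm1 : ρ ε ^ m ≤ 1 := pow_le_one₀ hρpos.le hρle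
    have hber : (1 - ρ ε ^ m) ^ (N ε + 1) ≤ 1 / (((N ε : ℝ) + 1) * ρ ε ^ m) := by
      have h := pow_one_sub_le _ (by positivity) hρm1 (N ε + 1) (Nat.succ_pos _)
      push_cast at h
      exact h
    have hkpow : k ε ^ (N ε + 1) ≤ 1 / ((N ε + 1) * ρ ε ^ m) :=
      le_trans (pow_le_pow_left₀ hkpos.le hkb _) (by exact_mod_cast hber)
    -- ρ⁻¹^r ≤ N+1
    have hNbig : (ρ ε)⁻¹ ^ r ≤ (N ε + 1 : ℝ) := by
      calc (ρ ε)⁻¹ ^ r ≤ (⌈(ρ ε)⁻¹ ^ r⌉₊ : ℝ) := Nat.le_ceil _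
        _ ≤ (N ε : ℝ) := by exact_mod_cast hMNε
        _ ≤ (N ε + 1 : ℝ) := by linarith
    have hpos2 : 0 < ((N ε : ℝ) + 1) * ρ ε ^ m := by positivity
    -- 1/((N+1)ρ^m) ≤ ρ^{q+N₀}
    have hkey : 1 / (((N ε : ℝ) + 1) * ρ ε ^ m) ≤ ρ ε ^ (q + N₀) := by
      rw [div_le_iff₀ hpos2]
      have : (ρ ε)⁻¹ ^ r * ρ ε ^ m ≤ ((N ε : ℝ) + 1) * ρ ε ^ m := by
        apply mul_le_mul_of_nonneg_right hNbig (by positivity)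
      have heq : ρ ε ^ (q + N₀) * ((ρ ε)⁻¹ ^ r * ρ ε ^ m) = 1 := by
        rw [hr, inv_pow]
        field_simp
        ring
      calc (1:ℝ) = ρ ε ^ (q + N₀) * ((ρ ε)⁻¹ ^ r * ρ ε ^ m) := heq.symm
        _ ≤ ρ ε ^ (q + N₀) * (((N ε : ℝ) + 1) * ρ ε ^ m) := by
            apply mul_le_mul_of_nonneg_left this (by positivity)
    have hfin : k ε ^ (N ε + 1) / (1 - k ε) ≤ ρ ε ^ (q + N₀) * ρ ε ^ (-(N₀ : ℤ)) := by
      rw [div_eq_mul_one_div]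
      apply mul_le_mul (le_trans hkpow (by exact_mod_cast hkey)) hinv
        (by positivity) (by positivity)
    calc k ε ^ (N ε + 1) / (1 - k ε) ≤ ρ ε ^ (q + N₀) * ρ ε ^ (-(N₀ : ℤ)) := hfin
      _ = ρ ε ^ q := by
          rw [zpow_neg, zpow_natCast, pow_add]
          field_simp
end

section
/- Let ρ be a gauge and (x_ε) a net of reals with |x_ε| ≤ M for all ε ≤ ε₀, where M ∈ ℝ_{>0}. Then for every q ∈ ℕ there exists a ρ-moderate net of naturals (M_ε) such that for all nets of naturals (N_ε) with N_ε ≥ M_ε eventually, | Σ_{n=0}^{N_ε} x_ε^n / n! − e^{x_ε} | ≤ ρ_ε^q for ε sufficiently small. In other words, the exponential hyperseries Σ_{n∈ℕ} x^n/n! converges in the sharp topology to e^x for finite x. -/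
open Filter Finset

lemma my_exp_tsum (x : ℝ) : Real.exp x = ∑' n : ℕ, x ^ n / n.factorial := by
  rw [Real.exp_eq_exp_ℝ, NormedSpace.exp_eq_tsum_div]

lemma my_abs_tsum_le (f : ℕ → ℝ) (hss : Summable f) (g : ℕ → ℝ) (hsb : Summable g)
    (hb : ∀ i, |f i| ≤ g i) : |∑' i, f i| ≤ ∑' i, g i := by
  calc |∑' i, f i| ≤ ∑' i, |f i| := by
        simpa [Real.norm_eq_abs] using norm_tsum_le_tsum_norm (f := f)
          (by simpa [Real.norm_eq_abs] using hss.abs)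
    _ ≤ ∑' i, g i := Summable.tsum_le_tsum hb hss.abs hsb

lemma exp_tail_bound (M x : ℝ) (hM : 0 < M) (hx : |x| ≤ M) (N : ℕ) :
    |∑ n ∈ Finset.range N, x ^ n / n.factorial - Real.exp x|
      ≤ Real.exp M * (M ^ N / N.factorial) := by
  have hs := Real.summable_pow_div_factorial x
  have hMs := Real.summable_pow_div_factorial M
  have hkey := hs.sum_add_tsum_nat_add N
  have heq : ∑ n ∈ Finset.range N, x ^ n / n.factorial - Real.exp x
      = -∑' i : ℕ, x ^ (i + N) / (i + N).factorial := by
    rw [my_exp_tsum, ← hkey]; ring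
  rw [heq, abs_neg]
  have hb : ∀ i : ℕ, |x ^ (i + N) / (i + N).factorial|
      ≤ M ^ N / N.factorial * (M ^ i / i.factorial) := by
    intro i
    rw [abs_div, abs_pow, Nat.abs_cast]
    have h1 : |x| ^ (i + N) ≤ M ^ (i + N) := pow_le_pow_left₀ (abs_nonneg x) hx _
    have h2 : (N.factorial * i.factorial : ℝ) ≤ (i + N).factorial := by
      exact_mod_cast Nat.le_of_dvd (i + N).factorial_pos
        (by rw [mul_comm]; exact Nat.factorial_mul_factorial_dvd_factorial_add i N)
    have h3 : (0:ℝ) < N.factorial * i.factorial := by positivity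
    calc |x| ^ (i + N) / ((i + N).factorial : ℝ)
        ≤ M ^ (i + N) / ((i + N).factorial : ℝ) :=
          div_le_div_of_nonneg_right h1 (by positivity) |>.trans_eq rfl
      _ ≤ M ^ (i + N) / ((N.factorial * i.factorial : ℝ)) :=
          div_le_div_of_nonneg_left (by positivity) h3 h2
      _ = M ^ N / N.factorial * (M ^ i / i.factorial) := by
          rw [pow_add]; field_simp
  have hsb : Summable (fun i : ℕ => M ^ N / N.factorial * (M ^ i / i.factorial)) :=
    hMs.mul_left _
  have hss : Summable (fun i : ℕ => x ^ (i + N) / (i + N).factorial) :=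
    (summable_nat_add_iff N).2 hs
  calc |∑' i : ℕ, x ^ (i + N) / (i + N).factorial|
      ≤ ∑' i : ℕ, (M ^ N / N.factorial * (M ^ i / i.factorial)) :=
        my_abs_tsum_le _ hss _ hsb hb
    _ = M ^ N / N.factorial * Real.exp M := by rw [tsum_mul_left, my_exp_tsum]
    _ = Real.exp M * (M ^ N / N.factorial) := mul_comm _ _

lemma fact_decay (M : ℝ) (hM : 0 < M) (k₀ : ℕ) (hk : 2 * M ≤ k₀) :
    ∀ m : ℕ, M ^ (k₀ + m) / (k₀ + m).factorial
      ≤ M ^ k₀ / k₀.factorial * (1/2) ^ m := by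
  intro m
  induction m with
  | zero => simp
  | succ m ih =>
    have hfp : (0:ℝ) < (k₀ + m).factorial := by exact_mod_cast (k₀ + m).factorial_pos
    have step : M ^ (k₀ + (m+1)) / ((k₀ + (m+1)).factorial : ℝ)
        = M ^ (k₀ + m) / (k₀ + m).factorial * (M / (k₀ + m + 1)) := by
      have : (k₀ + (m+1)).factorial = (k₀ + m + 1) * (k₀ + m).factorial := by
        rw [show k₀ + (m+1) = (k₀ + m) + 1 by ring, Nat.factorial_succ]
      rw [this, show k₀ + (m+1) = (k₀ + m) + 1 by ring, pow_succ]
      push_cast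
      field_simp
    have hhalf : M / (k₀ + m + 1 : ℝ) ≤ 1/2 := by
      rw [div_le_div_iff₀ (by positivity) (by norm_num)]
      have : 2 * M ≤ (k₀ : ℝ) := hk
      linarith [Nat.cast_nonneg (α := ℝ) m]
    calc M ^ (k₀ + (m+1)) / ((k₀ + (m+1)).factorial : ℝ)
        = M ^ (k₀ + m) / (k₀ + m).factorial * (M / (k₀ + m + 1)) := step
      _ ≤ M ^ k₀ / k₀.factorial * (1/2) ^ m * (1/2) := by
          apply mul_le_mul ih hhalf (by positivity) (by positivity)
      _ = M ^ k₀ / k₀.factorial * (1/2) ^ (m+1) := by ring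

lemma ceil_logb_pow (t : ℝ) (ht : 0 < t) :
    (1/2 : ℝ) ^ ⌈Real.logb 2 t⌉₊ ≤ 1 / t := by
  have h2 : t ≤ (2:ℝ) ^ (⌈Real.logb 2 t⌉₊ : ℕ) := by
    have h1 : t = (2:ℝ) ^ (Real.logb 2 t) := (Real.rpow_logb (by norm_num) (by norm_num) ht).symm
    calc t = (2:ℝ) ^ (Real.logb 2 t) := h1
      _ ≤ (2:ℝ) ^ ((⌈Real.logb 2 t⌉₊ : ℝ)) :=
          Real.rpow_le_rpow_of_exponent_le (by norm_num) (Nat.le_ceil _)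
      _ = (2:ℝ) ^ (⌈Real.logb 2 t⌉₊ : ℕ) := by rw [Real.rpow_natCast]
  rw [div_pow, one_pow]
  rw [div_le_div_iff₀ (by positivity) ht]
  calc 1 * t = t := one_mul t
    _ ≤ 2 ^ ⌈Real.logb 2 t⌉₊ := h2
    _ = 1 * 2 ^ ⌈Real.logb 2 t⌉₊ := (one_mul _).symm

lemma logb_le_two_mul (t : ℝ) (ht : 0 < t) : max (Real.logb 2 t) 0 ≤ 2 * t := by
  apply max_le _ (by positivity)
  rcases le_or_gt 1 t with h | h
  · have hlog : Real.log t ≤ t := (Real.log_le_sub_one_of_pos ht).trans (by linarith)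
    have hlog2 : (1/2 : ℝ) ≤ Real.log 2 := by
      have := Real.log_two_gt_d9; linarith
    have h0 : 0 ≤ Real.log t := Real.log_nonneg h
    calc Real.logb 2 t = Real.log t / Real.log 2 := rfl
      _ ≤ Real.log t / (1/2) := by
          apply div_le_div_of_nonneg_left h0 (by norm_num) hlog2
      _ = 2 * Real.log t := by ring
      _ ≤ 2 * t := by linarith
  · have : Real.logb 2 t ≤ 0 :=
      Real.logb_nonpos (b := 2) (by norm_num) ht.le h.le
    linarith

lemma gauge_ev_small (ρ : ℝ → ℝ) (h : Tendsto ρ (nhdsWithin 0 (Set.Ioi 0)) (nhds 0)) :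
    ∃ ε₂ : ℝ, 0 < ε₂ ∧ ∀ ε : ℝ, 0 < ε → ε ≤ ε₂ → ρ ε < 1/2 := by
  have hev : ∀ᶠ ε in nhdsWithin 0 (Set.Ioi 0), ρ ε < 1/2 :=
    h.eventually (eventually_lt_nhds (by norm_num))
  rw [eventually_nhdsWithin_iff, Metric.eventually_nhds_iff] at hev
  obtain ⟨δ, hδ, hδ'⟩ := hev
  refine ⟨δ/2, by linarith, fun ε hε hε' => ?_⟩
  exact hδ' (by rw [Real.dist_eq, sub_zero, abs_of_pos hε]; linarith) hε

lemma nat_ceil_le_max (a : ℝ) : (⌈a⌉₊ : ℝ) ≤ max a 0 + 1 := by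
  rcases le_or_gt a 0 with h | h
  · rw [Nat.ceil_eq_zero.mpr h]; have := le_max_right a 0; push_cast; linarith
  · have := (Nat.ceil_lt_add_one h.le).le
    have := le_max_left a 0
    linarith

/-- Exponential hyperseries: `Σ x^n/n!` converges sharply to `e^x` for finite `x`. -/
theorem exponential_hyperseries (ρ : ℝ → ℝ) (hρ : IsGauge ρ)
    (x : ℝ → ℝ) (M : ℝ) (hM : 0 < M) (ε₀ : ℝ) (hε₀ : 0 < ε₀)
    (hx : ∀ ε : ℝ, 0 < ε → ε ≤ ε₀ → |x ε| ≤ M) :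
    ∀ q : ℕ, ∃ Mn : ℝ → ℕ, Moderate ρ (fun ε => (Mn ε : ℝ)) ∧
      ∀ N : ℝ → ℕ, EvSmall (fun ε => Mn ε ≤ N ε) →
        EvSmall (fun ε =>
          |∑ n ∈ Finset.range (N ε + 1), x ε ^ n / n.factorial - Real.exp (x ε)| ≤ ρ ε ^ q) := by
  obtain ⟨hρ1, hρ2⟩ := hρ
  intro q
  set k₀ : ℕ := ⌈2*M⌉₊ with hk₀def
  have hk₀ : 2*M ≤ k₀ := Nat.le_ceil _
  set C : ℝ := Real.exp M * (M ^ k₀ / k₀.factorial) with hCdef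
  have hfpos : (0:ℝ) < k₀.factorial := by exact_mod_cast k₀.factorial_pos
  have hC : 0 < C := by positivity
  obtain ⟨ε₂, hε₂, hρhalf⟩ := gauge_ev_small ρ hρ2
  refine ⟨fun ε => k₀ + ⌈Real.logb 2 (C / ρ ε ^ q)⌉₊, ?_, ?_⟩
  · -- Moderateness
    obtain ⟨B, hB⟩ := exists_nat_ge ((k₀:ℝ) + 2 + 2*C)
    refine ⟨q + B, min ε₂ 1, lt_min hε₂ one_pos, fun ε hε hε' => ?_⟩
    have hρpos : 0 < ρ ε := (hρ1 ε hε (hε'.trans (min_le_right _ _))).1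
    have hhalf : ρ ε < 1/2 := hρhalf ε hε (hε'.trans (min_le_left _ _))
    have hq : 0 < ρ ε ^ q := by positivity
    set t : ℝ := C / ρ ε ^ q with htdef
    have htpos : 0 < t := by positivity
    have hinvq : (1:ℝ) ≤ (ρ ε ^ q)⁻¹ :=
      (one_le_inv₀ hq).2 (pow_le_one₀ hρpos.le (by linarith))
    simp only
    rw [zpow_neg, zpow_natCast, abs_of_nonneg (by positivity)]
    have h2B : (2:ℝ) ^ B ≤ (ρ ε ^ B)⁻¹ := by
      have h1 : ρ ε ^ B ≤ ((2:ℝ) ^ B)⁻¹ := by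
        calc ρ ε ^ B ≤ (1/2 : ℝ) ^ B := pow_le_pow_left₀ hρpos.le hhalf.le _
          _ = ((2:ℝ) ^ B)⁻¹ := by rw [div_pow, one_pow, one_div]
      calc (2:ℝ) ^ B = (((2:ℝ) ^ B)⁻¹)⁻¹ := by rw [inv_inv]
        _ ≤ (ρ ε ^ B)⁻¹ := inv_anti₀ (by positivity) h1
    calc ((k₀ + ⌈Real.logb 2 t⌉₊ : ℕ) : ℝ)
        = (k₀ : ℝ) + (⌈Real.logb 2 t⌉₊ : ℝ) := by push_cast; ring
      _ ≤ (k₀ : ℝ) + (max (Real.logb 2 t) 0 + 1) := by linarith [nat_ceil_le_max (Real.logb 2 t)]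
      _ ≤ (k₀ : ℝ) + (2 * t + 1) := by
          have := logb_le_two_mul t htpos
          linarith
      _ = (k₀ : ℝ) + 1 + 2 * C * (ρ ε ^ q)⁻¹ := by rw [htdef]; ring
      _ ≤ ((k₀ : ℝ) + 2 + 2 * C) * (ρ ε ^ q)⁻¹ := by nlinarith [Nat.cast_nonneg (α := ℝ) k₀]
      _ ≤ (B : ℝ) * (ρ ε ^ q)⁻¹ := mul_le_mul_of_nonneg_right hB (by positivity)
      _ ≤ (2:ℝ) ^ B * (ρ ε ^ q)⁻¹ := by
          apply mul_le_mul_of_nonneg_right _ (by positivity)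
          exact_mod_cast (Nat.lt_two_pow_self (n := B)).le
      _ ≤ (ρ ε ^ B)⁻¹ * (ρ ε ^ q)⁻¹ := mul_le_mul_of_nonneg_right h2B (by positivity)
      _ = (ρ ε ^ (q + B))⁻¹ := by rw [pow_add, mul_inv, mul_comm]
  · -- convergence
    intro N hN
    obtain ⟨ε₁, hε₁, hNle⟩ := hN
    refine ⟨min (min ε₀ ε₁) 1, lt_min (lt_min hε₀ hε₁) one_pos, fun ε hε hε' => ?_⟩
    have hxε : |x ε| ≤ M := hx ε hε (hε'.trans ((min_le_left _ _).trans (min_le_left _ _)))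
    have hρpos : 0 < ρ ε := (hρ1 ε hε (hε'.trans (min_le_right _ _))).1
    have hq : 0 < ρ ε ^ q := by positivity
    set t : ℝ := C / ρ ε ^ q with htdef
    have htpos : 0 < t := by positivity
    set m₀ : ℕ := ⌈Real.logb 2 t⌉₊ with hm₀def
    have hNε : k₀ + m₀ ≤ N ε := hNle ε hε (hε'.trans ((min_le_left _ _).trans (min_le_right _ _)))
    obtain ⟨m, hm⟩ := Nat.exists_eq_add_of_le (show k₀ ≤ N ε + 1 by omega)
    have hmm : m₀ ≤ m := by omega
    calc |∑ n ∈ Finset.range (N ε + 1), x ε ^ n / n.factorial - Real.exp (x ε)|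
        ≤ Real.exp M * (M ^ (N ε + 1) / (N ε + 1).factorial) :=
          exp_tail_bound M (x ε) hM hxε (N ε + 1)
      _ = Real.exp M * (M ^ (k₀ + m) / (k₀ + m).factorial) := by rw [hm]
      _ ≤ Real.exp M * (M ^ k₀ / k₀.factorial * (1/2) ^ m) := by
          apply mul_le_mul_of_nonneg_left (fact_decay M hM k₀ hk₀ m) (Real.exp_pos M).le
      _ = C * (1/2) ^ m := by rw [hCdef]; ring
      _ ≤ C * (1/2) ^ m₀ := by
          apply mul_le_mul_of_nonneg_left _ hC.le
          exact pow_le_pow_of_le_one (by norm_num) (by norm_num) hmm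
      _ ≤ C * (1 / t) := mul_le_mul_of_nonneg_left (ceil_logb_pow t htpos) hC.le
      _ = ρ ε ^ q := by rw [htdef, one_div_div]; field_simp
end

section
/- Let σ, ρ be gauges. The constant net a_{n,ε} = 1 is σ,ρ-moderate over hypersums (i.e. for every net of naturals (N_ε) with (N_ε) σ-moderate, the net (Σ_{n=0}^{N_ε} 1) = (N_ε + 1) is ρ-moderate) if and only if σ ≥ ρ*, i.e. ∃ Q ∈ ℕ with σ_ε ≥ ρ_ε^Q for ε sufficiently small. -/
open Filter Finset

/-- A net of naturals is `σ`-moderate. -/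
def ModerateNat (σ : ℝ → ℝ) (N : ℝ → ℕ) : Prop :=
  ∃ R : ℕ, EvSmall (fun ε => (N ε : ℝ) ≤ σ ε ^ (-(R : ℤ)))

lemma gauge_evsmall_le (σ : ℝ → ℝ) (hσ : IsGauge σ) (c : ℝ) (hc : 0 < c) :
    EvSmall (fun ε => σ ε ≤ c) := by
  have h := hσ.2
  rw [Metric.tendsto_nhds] at h
  have h2 := h c hc
  rw [eventually_iff, mem_nhdsGT_iff_exists_Ioc_subset] at h2
  obtain ⟨u, hu, hsub⟩ := h2
  exact ⟨u, hu, fun ε hε hεu => by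
    have := hsub ⟨hε, hεu⟩
    simp only [Set.mem_setOf_eq, Real.dist_eq, sub_zero] at this
    exact le_of_lt ((abs_lt.mp this).2)⟩

theorem one_moderate_over_hypersums_iff_geStar (σ ρ : ℝ → ℝ)
    (hσ : IsGauge σ) (hρ : IsGauge ρ) :
    (∀ N : ℝ → ℕ, ModerateNat σ N →
        Moderate ρ (fun ε => ∑ n ∈ Finset.range (N ε + 1), (1 : ℝ))) ↔
      ∃ Q : ℕ, EvSmall (fun ε => σ ε ≥ ρ ε ^ Q) := by
  constructor
  · intro H
    -- use N ε = ⌊(σ ε)⁻¹⌋₊ + 1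
    set N : ℝ → ℕ := fun ε => ⌊(σ ε)⁻¹⌋₊ + 1 with hN
    have hmod : ModerateNat σ N := by
      obtain ⟨ε₁, hε₁, h₁⟩ := gauge_evsmall_le σ hσ (1/2) (by norm_num)
      refine ⟨2, min ε₁ 1, lt_min hε₁ one_pos, fun ε hε hεle => ?_⟩
      have hε1 : ε ≤ 1 := hεle.trans (min_le_right _ _)
      have hσpos : 0 < σ ε := (hσ.1 ε hε hε1).1
      have hσhalf : σ ε ≤ 1/2 := h₁ ε hε (hεle.trans (min_le_left _ _))
      have hfloor : (⌊(σ ε)⁻¹⌋₊ : ℝ) ≤ (σ ε)⁻¹ := Nat.floor_le (by positivity)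
      have : (N ε : ℝ) ≤ (σ ε)⁻¹ + 1 := by
        simp only [hN, Nat.cast_add, Nat.cast_one]; linarith
      have hkey : (σ ε)⁻¹ + 1 ≤ ((σ ε) ^ 2)⁻¹ := by
        have hinvpos : 0 < (σ ε)⁻¹ := by positivity
        have hi : σ ε * (σ ε)⁻¹ = 1 := mul_inv_cancel₀ hσpos.ne'
        have h2 : (2 : ℝ) ≤ (σ ε)⁻¹ := by nlinarith
        rw [sq, mul_inv]
        nlinarith
      calc (N ε : ℝ) ≤ (σ ε)⁻¹ + 1 := this
        _ ≤ ((σ ε) ^ 2)⁻¹ := hkey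
        _ = σ ε ^ (-(2 : ℤ)) := by
            rw [zpow_neg, ← zpow_natCast]; norm_num
    obtain ⟨M, ε₂, hε₂, h₂⟩ := H N hmod
    refine ⟨M, min ε₂ 1, lt_min hε₂ one_pos, fun ε hε hεle => ?_⟩
    have hε1 : ε ≤ 1 := hεle.trans (min_le_right _ _)
    have hσpos : 0 < σ ε := (hσ.1 ε hε hε1).1
    have hρpos : 0 < ρ ε := (hρ.1 ε hε hε1).1
    have h3 := h₂ ε hε (hεle.trans (min_le_left _ _))
    simp only [Finset.sum_const, Finset.card_range, nsmul_eq_mul, mul_one] at h3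
    have habs : |((N ε + 1 : ℕ) : ℝ)| = ((N ε + 1 : ℕ) : ℝ) := abs_of_nonneg (by positivity)
    rw [habs] at h3
    have hlt : (σ ε)⁻¹ < (N ε : ℝ) := by
      simp only [hN, Nat.cast_add, Nat.cast_one]
      exact Nat.lt_floor_add_one _
    have h4 : (σ ε)⁻¹ ≤ ρ ε ^ (-(M : ℤ)) := by
      have : (N ε : ℝ) ≤ ((N ε + 1 : ℕ) : ℝ) := by push_cast; linarith
      linarith
    rw [zpow_neg, zpow_natCast, inv_le_inv₀ (by positivity) (by positivity)] at h4
    exact h4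
  · rintro ⟨Q, εQ, hεQ, hQ⟩ N ⟨R, εR, hεR, hR⟩
    obtain ⟨ε₁, hε₁, h₁⟩ := gauge_evsmall_le σ hσ (1/2) (by norm_num)
    refine ⟨Q * (R + 1), min (min εQ εR) (min ε₁ 1), by positivity, fun ε hε hεle => ?_⟩
    have hε1 : ε ≤ 1 := hεle.trans ((min_le_right _ _).trans (min_le_right _ _))
    have hσpos : 0 < σ ε := (hσ.1 ε hε hε1).1
    have hρpos : 0 < ρ ε := (hρ.1 ε hε hε1).1
    have hge : ρ ε ^ Q ≤ σ ε := hQ ε hε (hεle.trans ((min_le_left _ _).trans (min_le_left _ _)))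
    have hNR : (N ε : ℝ) ≤ σ ε ^ (-(R : ℤ)) :=
      hR ε hε (hεle.trans ((min_le_left _ _).trans (min_le_right _ _)))
    have hσhalf : σ ε ≤ 1/2 := h₁ ε hε (hεle.trans ((min_le_right _ _).trans (min_le_left _ _)))
    simp only [Finset.sum_const, Finset.card_range, nsmul_eq_mul, mul_one]
    rw [abs_of_nonneg (by positivity)]
    have hσR : σ ε ^ (-(R : ℤ)) = ((σ ε) ^ R)⁻¹ := by rw [zpow_neg, zpow_natCast]
    have hσR1 : (1 : ℝ) ≤ ((σ ε) ^ R)⁻¹ := by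
      rw [le_inv_comm₀ one_pos (by positivity)]
      simpa using pow_le_one₀ hσpos.le (hσ.1 ε hε hε1).2
    have step1 : ((N ε + 1 : ℕ) : ℝ) ≤ 2 * ((σ ε) ^ R)⁻¹ := by
      push_cast
      rw [hσR] at hNR
      linarith
    have step2 : 2 * ((σ ε) ^ R)⁻¹ ≤ ((σ ε) ^ (R + 1))⁻¹ := by
      rw [pow_succ, mul_inv]
      have h2 : (2 : ℝ) ≤ (σ ε)⁻¹ := by
        rw [le_inv_comm₀ two_pos hσpos]; linarith
      have hinvR : (0 : ℝ) ≤ ((σ ε) ^ R)⁻¹ := by positivity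
      calc 2 * ((σ ε) ^ R)⁻¹ ≤ (σ ε)⁻¹ * ((σ ε) ^ R)⁻¹ :=
            mul_le_mul_of_nonneg_right h2 hinvR
        _ = ((σ ε) ^ R)⁻¹ * (σ ε)⁻¹ := mul_comm _ _
    have step3 : ((σ ε) ^ (R + 1))⁻¹ ≤ ((ρ ε) ^ (Q * (R + 1)))⁻¹ := by
      rw [inv_le_inv₀ (by positivity) (by positivity), pow_mul]
      exact pow_le_pow_left₀ (by positivity) hge _
    calc ((N ε + 1 : ℕ) : ℝ) ≤ 2 * ((σ ε) ^ R)⁻¹ := step1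
      _ ≤ ((σ ε) ^ (R + 1))⁻¹ := step2
      _ ≤ ((ρ ε) ^ (Q * (R + 1)))⁻¹ := step3
      _ = ρ ε ^ (-((Q * (R + 1) : ℕ) : ℤ)) := by rw [zpow_neg, zpow_natCast]
end
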